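/- (Corollary: classical embeddings) Let (A, A₊, u_A) be a probabilistic model that can be embedded into the classical model C_n for some n ∈ ℕ. Then the model is itself classical: there exist m ∈ ℕ and a real-linear bijection T : A → ℝ^m such that T(A₊) equals the nonnegative orthant of ℝ^m and T(u_A) = (1, …, 1). -/

import Mathlib

open Module

/-- A probabilistic model `(A, A₊, u_A)`: a finite-dimensional real vector space `A`,
a closed generating pointed convex cone `A₊`, and an order unit `u_A ∈ A₊`. -/
structure ProbModel (V : Type) [NormedAddCommGroup V] [NormedSpace ℝ V]
    [FiniteDimensional ℝ V] where
  pos : Set V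
  unit : V
  add_mem : ∀ x ∈ pos, ∀ y ∈ pos, x + y ∈ pos
  smul_mem : ∀ c : ℝ, 0 ≤ c → ∀ x ∈ pos, c • x ∈ pos
  pointed : ∀ x ∈ pos, -x ∈ pos → x = 0
  closed : IsClosed pos
  spanning : Submodule.span ℝ pos = ⊤
  unit_mem : unit ∈ pos
  orderUnit : ∀ v : V, ∃ t : ℝ, 0 ≤ t ∧ t • unit - v ∈ pos

/-- The dual cone `A₊* = {ω ∈ A* : ω(e) ≥ 0 for all e ∈ A₊}`. -/
def ProbModel.dualPos {V : Type} [NormedAddCommGroup V] [NormedSpace ℝ V]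
    [FiniteDimensional ℝ V] (M : ProbModel V) : Set (Dual ℝ V) :=
  {ω | ∀ e ∈ M.pos, 0 ≤ ω e}

/-- An embedding `(φ, ψ)` of a probabilistic model `M` into a probabilistic model `N`. -/
structure ModelEmbedding {V W : Type} [NormedAddCommGroup V] [NormedSpace ℝ V]
    [FiniteDimensional ℝ V] [NormedAddCommGroup W] [NormedSpace ℝ W]
    [FiniteDimensional ℝ W] (M : ProbModel V) (N : ProbModel W) where
  φ : V →ₗ[ℝ] W
  ψ : Dual ℝ V →ₗ[ℝ] Dual ℝ W
  φ_pos : ∀ a ∈ M.pos, φ a ∈ N.pos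
  ψ_pos : ∀ ω ∈ M.dualPos, ψ ω ∈ N.dualPos
  φ_unit : φ M.unit = N.unit
  pairing : ∀ (ω : Dual ℝ V) (e : V), ψ ω (φ e) = ω e


open Module Finset

namespace ClassicalEmbedAux

variable {n : ℕ}

/-- Support of row `i` of `P`. -/
noncomputable def Crow (P : Fin n → Fin n → ℝ) (i : Fin n) : Finset (Fin n) :=
  univ.filter (fun j => 0 < P i j)

lemma mem_Crow {P : Fin n → Fin n → ℝ} {i j : Fin n} : j ∈ Crow P i ↔ 0 < P i j := by
  simp [Crow]

/-- A minimal (recurrent) class. -/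
def MinClass (P : Fin n → Fin n → ℝ) (C : Finset (Fin n)) : Prop :=
  C.Nonempty ∧ ∀ l ∈ C, Crow P l = C

section

variable {P : Fin n → Fin n → ℝ}
  (hpos : ∀ i j, 0 ≤ P i j) (hrow : ∀ i, ∑ j, P i j = 1)
  (hidem : ∀ i j, ∑ k, P i k * P k j = P i j)

include hpos

lemma not_mem_Crow {i j : Fin n} (h : j ∉ Crow P i) : P i j = 0 := by
  rw [mem_Crow, not_lt] at h
  exact le_antisymm h (hpos i j)

lemma sum_mul_Crow (i : Fin n) (x : Fin n → ℝ) :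
    ∑ j ∈ Crow P i, P i j * x j = ∑ j, P i j * x j :=
  Finset.sum_subset (subset_univ _) (fun j _ hj => by rw [not_mem_Crow hpos hj, zero_mul])

include hrow

lemma sum_Crow (i : Fin n) : ∑ j ∈ Crow P i, P i j = 1 := by
  rw [Finset.sum_subset (subset_univ _) (fun j _ hj => not_mem_Crow hpos hj), hrow]

lemma Crow_nonempty (i : Fin n) : (Crow P i).Nonempty := by
  by_contra h
  rw [Finset.not_nonempty_iff_eq_empty] at h
  have : ∑ j ∈ Crow P i, P i j = 0 := by rw [h]; simp
  rw [sum_Crow hpos hrow] at this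
  norm_num at this

include hidem

omit hrow in
lemma Crow_subset {i j : Fin n} (hj : j ∈ Crow P i) : Crow P j ⊆ Crow P i := by
  intro k hk
  rw [mem_Crow] at *
  have h1 : P i j * P j k ≤ ∑ l, P i l * P l k :=
    Finset.single_le_sum (fun l _ => mul_nonneg (hpos i l) (hpos l k)) (mem_univ j)
  rw [hidem i k] at h1
  exact lt_of_lt_of_le (mul_pos hj hk) h1

lemma exists_minclass (i : Fin n) : ∃ j ∈ Crow P i, MinClass P (Crow P j) := by
  obtain ⟨j, hj, hmin⟩ := Finset.exists_min_image (Crow P i) (fun j => (Crow P j).card)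
    (Crow_nonempty hpos hrow i)
  refine ⟨j, hj, Crow_nonempty hpos hrow j, fun l hl => ?_⟩
  have h1 : Crow P l ⊆ Crow P j := Crow_subset hpos hidem hl
  have h2 : l ∈ Crow P i := Crow_subset hpos hidem hj hl
  exact Finset.eq_of_subset_of_card_le h1 (hmin l h2)

lemma row_const {C : Finset (Fin n)} (hC : MinClass P C) {l l' : Fin n}
    (hl : l ∈ C) (hl' : l' ∈ C) (j : Fin n) : P l j = P l' j := by
  obtain ⟨ls, hls, hmax⟩ := Finset.exists_max_image C (fun l => P l j) hC.1
  suffices h : ∀ t ∈ C, P t j = P ls j by rw [h l hl, h l' hl']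
  intro t ht
  have hrowls : Crow P ls = C := hC.2 ls hls
  have hsum0 : ∑ l'' ∈ C, P ls l'' * (P ls j - P l'' j) = 0 := by
    have e1 : ∑ l'' ∈ C, P ls l'' * P ls j = P ls j := by
      rw [← Finset.sum_mul, ← hrowls, sum_Crow hpos hrow, one_mul]
    have e2 : ∑ l'' ∈ C, P ls l'' * P l'' j = P ls j := by
      rw [← hrowls, sum_mul_Crow hpos, hidem]
    simp only [mul_sub, Finset.sum_sub_distrib, e1, e2, sub_self]
  have hterm := (Finset.sum_eq_zero_iff_of_nonneg (fun l'' hl'' =>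
    mul_nonneg (hpos ls l'') (sub_nonneg.2 (hmax l'' hl'')))).1 hsum0 t ht
  have htpos : 0 < P ls t := mem_Crow.1 (hrowls ▸ ht)
  rcases mul_eq_zero.1 hterm with h | h
  · exact absurd h htpos.ne'
  · linarith [sub_eq_zero.1 h]

end

open scoped Classical in
/-- The union of all minimal classes. -/
noncomputable def Uset (P : Fin n → Fin n → ℝ) : Finset (Fin n) :=
  univ.filter (fun l => l ∈ Crow P l ∧ MinClass P (Crow P l))

lemma mem_Uset {P : Fin n → Fin n → ℝ} {l : Fin n} :
    l ∈ Uset P ↔ l ∈ Crow P l ∧ MinClass P (Crow P l) := by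
  simp [Uset]

lemma minclass_subset_Uset {P : Fin n → Fin n → ℝ} {C : Finset (Fin n)}
    (hC : MinClass P C) : C ⊆ Uset P := by
  intro l hl
  have h := hC.2 l hl
  rw [mem_Uset, h]
  exact ⟨hl, h ▸ hC⟩

section

variable {P : Fin n → Fin n → ℝ}
  (hpos : ∀ i j, 0 ≤ P i j) (hrow : ∀ i, ∑ j, P i j = 1)
  (hidem : ∀ i j, ∑ k, P i k * P k j = P i j)

include hpos hrow hidem

lemma sum_Uset_eq_one (i : Fin n) : ∑ l ∈ Uset P, P i l = 1 := by
  set x : Fin n → ℝ := fun i => ∑ l ∈ Uset P, P i l with hx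
  have hharm : ∀ i, ∑ j, P i j * x j = x i := by
    intro i
    calc ∑ j, P i j * x j = ∑ j, ∑ l ∈ Uset P, P i j * P j l := by
          simp only [hx, Finset.mul_sum]
      _ = ∑ l ∈ Uset P, ∑ j, P i j * P j l := Finset.sum_comm
      _ = ∑ l ∈ Uset P, P i l := by simp only [hidem]
  have hle1 : ∀ i, x i ≤ 1 := by
    intro i
    rw [← hrow i]
    exact Finset.sum_le_sum_of_subset_of_nonneg (subset_univ _) (fun j _ _ => hpos i j)
  have hone : ∀ i, 1 ≤ x i := by
    intro i
    obtain ⟨i0, _, hmin⟩ := Finset.exists_min_image univ x ⟨i, mem_univ i⟩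
    obtain ⟨j, hjC, hjmc⟩ := exists_minclass hpos hrow hidem i0
    have hxj : x j = 1 := by
      refine le_antisymm (hle1 j) ?_
      have hsub : Crow P j ⊆ Uset P := minclass_subset_Uset hjmc
      calc (1:ℝ) = ∑ l ∈ Crow P j, P j l := (sum_Crow hpos hrow j).symm
        _ ≤ ∑ l ∈ Uset P, P j l :=
            Finset.sum_le_sum_of_subset_of_nonneg hsub (fun l _ _ => hpos j l)
    have hzero : ∑ jj, P i0 jj * (x jj - x i0) = 0 := by
      have h1 : ∑ jj, P i0 jj * x jj = x i0 := hharm i0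
      have h2 : ∑ jj, P i0 jj * x i0 = x i0 := by rw [← Finset.sum_mul, hrow, one_mul]
      simp only [mul_sub, Finset.sum_sub_distrib, h1, h2, sub_self]
    have hterm := (Finset.sum_eq_zero_iff_of_nonneg (fun jj _ =>
      mul_nonneg (hpos i0 jj) (sub_nonneg.2 (hmin jj (mem_univ jj))))).1 hzero j (mem_univ j)
    have hj0 : 0 < P i0 j := mem_Crow.1 hjC
    have hxji0 : x j = x i0 := by
      rcases mul_eq_zero.1 hterm with h | h
      · exact absurd h hj0.ne'
      · linarith [sub_eq_zero.1 h]
    calc (1:ℝ) = x i0 := by rw [← hxj, hxji0]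
      _ ≤ x i := hmin i (mem_univ i)
  exact le_antisymm (hle1 i) (hone i)

lemma Crow_subset_Uset (i : Fin n) : Crow P i ⊆ Uset P := by
  intro j hj
  by_contra hjU
  have h1 : ∑ l ∈ univ \ Uset P, P i l = 0 := by
    rw [Finset.sum_sdiff_eq_sub (subset_univ _), hrow, sum_Uset_eq_one hpos hrow hidem,
      sub_self]
  have h2 := (Finset.sum_eq_zero_iff_of_nonneg (fun l _ => hpos i l)).1 h1 j
    (Finset.mem_sdiff.2 ⟨mem_univ j, hjU⟩)
  exact absurd h2 (ne_of_gt (mem_Crow.1 hj))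

/-- Structure theorem for row-stochastic idempotent nonnegative matrices. -/
lemma exists_structure :
    ∃ (m : ℕ) (ν a : Fin m → Fin n → ℝ),
      (∀ k j, 0 ≤ ν k j) ∧ (∀ k, ∑ j, ν k j = 1) ∧ (∀ k i, 0 ≤ a k i) ∧
      (∀ k l, ∑ i, ν k i * a l i = if k = l then 1 else 0) ∧
      (∀ i j, P i j = ∑ k, a k i * ν k j) ∧
      (∀ k i, ∑ j, P i j * a k j = a k i) := by
  classical
  set S : Finset (Finset (Fin n)) := (Uset P).image (fun l => Crow P l) with hS
  let e : Fin S.card ≃ {C // C ∈ S} := S.equivFin.symm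
  let Ck : Fin S.card → Finset (Fin n) := fun k => (e k : Finset (Fin n))
  have hCkS : ∀ k, Ck k ∈ S := fun k => (e k).2
  have hmc : ∀ k, MinClass P (Ck k) := by
    intro k
    obtain ⟨l, hl, hcl⟩ := Finset.mem_image.1 (hCkS k)
    rw [← hcl]
    exact (mem_Uset.1 hl).2
  have hCkinj : Function.Injective Ck :=
    fun k k' h => e.injective (Subtype.ext h)
  have hdisj : ∀ k k', k ≠ k' → ∀ l, l ∈ Ck k → l ∈ Ck k' → False := by
    intro k k' hkk' l hl hl'
    exact hkk' (hCkinj (((hmc k).2 l hl).symm.trans ((hmc k').2 l hl')))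
  have hUeq : Uset P = univ.biUnion Ck := by
    ext l
    simp only [Finset.mem_biUnion, mem_univ, true_and]
    constructor
    · intro hl
      have hmem : Crow P l ∈ S := Finset.mem_image.2 ⟨l, hl, rfl⟩
      refine ⟨e.symm ⟨Crow P l, hmem⟩, ?_⟩
      show l ∈ (e (e.symm ⟨Crow P l, hmem⟩) : Finset (Fin n))
      rw [e.apply_symm_apply]
      exact (mem_Uset.1 hl).1
    · rintro ⟨k, hk⟩
      exact minclass_subset_Uset (hmc k) hk
  have hne : ∀ k, (Ck k).Nonempty := fun k => (hmc k).1
  let rep : Fin S.card → Fin n := fun k => (hne k).choose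
  have hrep : ∀ k, rep k ∈ Ck k := fun k => (hne k).choose_spec
  have hCrowrep : ∀ k, Crow P (rep k) = Ck k := fun k => (hmc k).2 _ (hrep k)
  have hpd : ((univ : Finset (Fin S.card)) : Set (Fin S.card)).PairwiseDisjoint Ck := by
    intro k _ k' _ hkk'
    exact Finset.disjoint_left.2 (fun l hl hl' => hdisj k k' hkk' l hl hl')
  refine ⟨S.card, fun k => P (rep k), fun k i => ∑ l ∈ Ck k, P i l,
    fun k j => hpos _ j, fun k => hrow _, fun k i => Finset.sum_nonneg fun l _ => hpos i l,
    ?_, ?_, ?_⟩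
  · -- orthogonality
    intro k l
    have hrestrict : ∑ i, P (rep k) i * ∑ l' ∈ Ck l, P i l'
        = ∑ i ∈ Ck k, P (rep k) i * ∑ l' ∈ Ck l, P i l' := by
      rw [← hCrowrep k]
      exact (Finset.sum_subset (subset_univ _) (fun i _ hi => by
        rw [not_mem_Crow hpos hi, zero_mul])).symm
    rw [hrestrict]
    have hswap : ∑ i ∈ Ck k, P (rep k) i * ∑ l' ∈ Ck l, P i l'
        = ∑ l' ∈ Ck l, ∑ i ∈ Ck k, P (rep k) i * P i l' := by
      simp only [Finset.mul_sum]
      exact Finset.sum_comm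
    rw [hswap]
    have hinner : ∀ l', ∑ i ∈ Ck k, P (rep k) i * P i l' = P (rep k) l' := by
      intro l'
      rw [← hCrowrep k, sum_mul_Crow hpos, hidem]
    simp only [hinner]
    by_cases hkl : k = l
    · subst hkl
      simp only [if_pos rfl]
      rw [← hCrowrep k]
      exact sum_Crow hpos hrow _
    · rw [if_neg hkl]
      refine Finset.sum_eq_zero fun l' hl' => ?_
      refine not_mem_Crow hpos ?_
      rw [hCrowrep k]
      exact fun h => hdisj k l hkl l' h hl'
  · -- factorization
    intro i j
    have hconst : ∀ k, ∀ l ∈ Ck k, P l j = P (rep k) j :=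
      fun k l hl => row_const hpos hrow hidem (hmc k) hl (hrep k) j
    calc P i j = ∑ l, P i l * P l j := (hidem i j).symm
      _ = ∑ l ∈ Uset P, P i l * P l j := by
          refine (Finset.sum_subset (subset_univ _) (fun l _ hl => ?_)).symm
          have : P i l = 0 := not_mem_Crow hpos (fun h => hl (Crow_subset_Uset hpos hrow hidem i h))
          rw [this, zero_mul]
      _ = ∑ k, ∑ l ∈ Ck k, P i l * P l j := by rw [hUeq, Finset.sum_biUnion hpd]
      _ = ∑ k, (∑ l ∈ Ck k, P i l) * P (rep k) j := by
          refine Finset.sum_congr rfl fun k _ => ?_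
          rw [Finset.sum_mul]
          exact Finset.sum_congr rfl fun l hl => by rw [hconst k l hl]
  · -- harmonicity of a
    intro k i
    calc ∑ j, P i j * ∑ l ∈ Ck k, P j l = ∑ j, ∑ l ∈ Ck k, P i j * P j l := by
          simp only [Finset.mul_sum]
      _ = ∑ l ∈ Ck k, ∑ j, P i j * P j l := Finset.sum_comm
      _ = ∑ l ∈ Ck k, P i l := by simp only [hidem]

end

end ClassicalEmbedAux

section Main

open ClassicalEmbedAux

/-- **Corollary: classical embeddings.** If a probabilistic model
`(A, A₊, u_A)` can be embedded into the classical model `C_n` for some `n` (cone the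
nonnegative orthant, unit effect `(1, …, 1)`, dual identified with `ℝⁿ` via the dot
product), then the model is itself classical: there are `m ∈ ℕ` and a real-linear
bijection `T : A → ℝ^m` with `T(A₊)` the nonnegative orthant and `T(u_A) = (1, …, 1)`. -/
theorem classical_embeddable_is_classical {V : Type} [NormedAddCommGroup V]
    [NormedSpace ℝ V] [FiniteDimensional ℝ V] (M : ProbModel V) (n : ℕ)
    (φ : V →ₗ[ℝ] (Fin n → ℝ)) (ψ : Dual ℝ V →ₗ[ℝ] (Fin n → ℝ))
    (hφ : ∀ a ∈ M.pos, ∀ i, 0 ≤ φ a i)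
    (hψ : ∀ ω ∈ M.dualPos, ∀ i, 0 ≤ ψ ω i)
    (hu : φ M.unit = fun _ => 1)
    (hp : ∀ (ω : Dual ℝ V) (e : V), ∑ i, ψ ω i * φ e i = ω e) :
    ∃ (m : ℕ) (T : V ≃ₗ[ℝ] (Fin m → ℝ)),
      T '' M.pos = {v : Fin m → ℝ | ∀ i, 0 ≤ v i}
      ∧ T M.unit = fun _ => 1 := by
  classical
  -- coordinate functionals
  set ω : Fin n → Dual ℝ V := fun i => (LinearMap.proj i).comp φ with hω
  have hωapp : ∀ i e, ω i e = φ e i := fun i e => rfl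
  have hωpos : ∀ i, ω i ∈ M.dualPos := fun i e he => hφ e he i
  set P : Fin n → Fin n → ℝ := fun i j => ψ (ω i) j with hP
  have hPpos : ∀ i j, 0 ≤ P i j := fun i j => hψ (ω i) (hωpos i) j
  have hφu : ∀ j, φ M.unit j = 1 := fun j => congrFun hu j
  have hProw : ∀ i, ∑ j, P i j = 1 := by
    intro i
    have h1 := hp (ω i) M.unit
    simp only [hφu, mul_one] at h1
    simp only [hP]
    rw [h1, hωapp, hφu]
  have hωdecomp : ∀ i, ω i = ∑ j, P i j • ω j := by
    intro i
    apply LinearMap.ext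
    intro e
    have h1 := hp (ω i) e
    simp only [LinearMap.sum_apply, LinearMap.smul_apply, smul_eq_mul]
    rw [← h1]
    simp only [hP]
    exact Finset.sum_congr rfl fun j _ => by rw [hωapp j e]
  have hPidem : ∀ i j, ∑ k, P i k * P k j = P i j := by
    intro i j
    have h1 : ψ (ω i) = ∑ k, P i k • ψ (ω k) := by
      conv_lhs => rw [hωdecomp i]
      rw [map_sum]
      exact Finset.sum_congr rfl fun k _ => by rw [map_smul]
    have h2 := congrFun h1 j
    rw [Finset.sum_apply] at h2
    simp only [Pi.smul_apply, smul_eq_mul] at h2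
    exact h2.symm
  have hharm : ∀ (e : V) i, ∑ j, P i j * φ e j = φ e i := by
    intro e i
    exact (hp (ω i) e).trans (hωapp i e)
  have hφinj : ∀ e : V, φ e = 0 → e = 0 := by
    intro e he
    rw [← Module.forall_dual_apply_eq_zero_iff ℝ e]
    intro ω'
    rw [← hp ω' e, he]
    simp
  have hρ : ∀ x : Fin n → ℝ, ∃ v : V, ∀ ω' : Dual ℝ V, ω' v = ∑ i, ψ ω' i * x i := by
    intro x
    refine ⟨(Module.evalEquiv ℝ V).symm (∑ i, x i • ((LinearMap.proj i).comp ψ)), fun ω' => ?_⟩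
    rw [Module.apply_evalEquiv_symm_apply]
    simp only [LinearMap.sum_apply, LinearMap.smul_apply, LinearMap.coe_comp,
      Function.comp_apply, LinearMap.proj_apply, smul_eq_mul]
    exact Finset.sum_congr rfl fun i _ => mul_comm _ _
  obtain ⟨m, ν, a, hν0, hν1, ha0, hortho, hfact, haharm⟩ :=
    exists_structure hPpos hProw hPidem
  set T₀ : V →ₗ[ℝ] (Fin m → ℝ) :=
    LinearMap.pi (fun k => ∑ j, ν k j • ((LinearMap.proj j).comp φ)) with hT₀def
  have hT₀ : ∀ v k, T₀ v k = ∑ j, ν k j * φ v j := by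
    intro v k
    simp [hT₀def, LinearMap.pi_apply, LinearMap.sum_apply, LinearMap.smul_apply,
      smul_eq_mul]
  have hexp : ∀ (v : V) i, φ v i = ∑ k, (∑ j, ν k j * φ v j) * a k i := by
    intro v i
    calc φ v i = ∑ j, P i j * φ v j := (hharm v i).symm
      _ = ∑ j, (∑ k, a k i * ν k j) * φ v j := by
          exact Finset.sum_congr rfl fun j _ => by rw [← hfact]
      _ = ∑ j, ∑ k, a k i * ν k j * φ v j := by
          exact Finset.sum_congr rfl fun j _ => Finset.sum_mul _ _ _
      _ = ∑ k, ∑ j, a k i * ν k j * φ v j := Finset.sum_comm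
      _ = ∑ k, (∑ j, ν k j * φ v j) * a k i := by
          refine Finset.sum_congr rfl fun k _ => ?_
          rw [Finset.sum_mul]
          exact Finset.sum_congr rfl fun j _ => by ring
  have hker : ∀ v, T₀ v = 0 → v = 0 := by
    intro v hv
    apply hφinj
    funext i
    rw [Pi.zero_apply, hexp v i]
    refine Finset.sum_eq_zero fun k _ => ?_
    have : (∑ j, ν k j * φ v j) = 0 := by rw [← hT₀, hv]; rfl
    rw [this, zero_mul]
  have hinj : Function.Injective T₀ := by
    rw [← LinearMap.ker_eq_bot]
    exact LinearMap.ker_eq_bot'.mpr hker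
  have hsurjaux : ∀ t : Fin m → ℝ, ∃ v : V, (∀ i, φ v i = ∑ k, t k * a k i) ∧ T₀ v = t := by
    intro t
    obtain ⟨v, hv⟩ := hρ (fun i => ∑ k, t k * a k i)
    have hφv : ∀ i, φ v i = ∑ k, t k * a k i := by
      intro i
      have h1 := hv (ω i)
      rw [hωapp] at h1
      rw [h1]
      calc ∑ j, ψ (ω i) j * ∑ k, t k * a k j
          = ∑ j, ∑ k, t k * (P i j * a k j) := by
            refine Finset.sum_congr rfl fun j _ => ?_
            rw [Finset.mul_sum]
            exact Finset.sum_congr rfl fun k _ => by simp only [hP]; ring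
        _ = ∑ k, ∑ j, t k * (P i j * a k j) := Finset.sum_comm
        _ = ∑ k, t k * a k i := by
            refine Finset.sum_congr rfl fun k _ => ?_
            rw [← Finset.mul_sum, haharm]
    refine ⟨v, hφv, funext fun k => ?_⟩
    rw [hT₀]
    calc ∑ j, ν k j * φ v j = ∑ j, ∑ k', t k' * (ν k j * a k' j) := by
          refine Finset.sum_congr rfl fun j _ => ?_
          rw [hφv, Finset.mul_sum]
          exact Finset.sum_congr rfl fun k' _ => by ring
      _ = ∑ k', ∑ j, t k' * (ν k j * a k' j) := Finset.sum_comm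
      _ = ∑ k', t k' * (if k = k' then 1 else 0) := by
          refine Finset.sum_congr rfl fun k' _ => ?_
          rw [← Finset.mul_sum, hortho]
      _ = t k := by simp
  have hsurj : Function.Surjective T₀ := fun t => by
    obtain ⟨v, _, hv⟩ := hsurjaux t
    exact ⟨v, hv⟩
  have hzeromem : (0 : V) ∈ M.pos := by
    have := M.smul_mem 0 le_rfl _ M.unit_mem
    rwa [zero_smul] at this
  have hposchar : ∀ v : V, (∀ i, 0 ≤ φ v i) → v ∈ M.pos := by
    intro v hv
    by_contra hvpos
    have hconv : Convex ℝ M.pos := by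
      intro x hx y hy s t hs ht _
      exact M.add_mem _ (M.smul_mem s hs x hx) _ (M.smul_mem t ht y hy)
    obtain ⟨f, u, hfs, hfv⟩ := geometric_hahn_banach_closed_point hconv M.closed hvpos
    have h0u : (0:ℝ) < u := by
      have := hfs 0 hzeromem
      simpa using this
    have hfneg : ∀ x ∈ M.pos, f x ≤ 0 := by
      intro x hx
      by_contra hfx
      push_neg at hfx
      have hc : (0:ℝ) ≤ (u + 1) / f x := div_nonneg (by linarith) hfx.le
      have h1 := hfs _ (M.smul_mem _ hc x hx)
      rw [map_smul, smul_eq_mul, div_mul_cancel₀ _ hfx.ne'] at h1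
      linarith
    set ω' : Dual ℝ V := -(f : V →ₗ[ℝ] ℝ) with hω'
    have hω'pos : ω' ∈ M.dualPos := by
      intro x hx
      have := hfneg x hx
      simp only [hω', LinearMap.neg_apply, ContinuousLinearMap.coe_coe]
      linarith
    have h1 : 0 ≤ ω' v := by
      rw [← hp ω' v]
      exact Finset.sum_nonneg fun i _ => mul_nonneg (hψ ω' hω'pos i) (hv i)
    have h2 : ω' v = -f v := by
      simp [hω']
    rw [h2] at h1
    linarith
  refine ⟨m, LinearEquiv.ofBijective T₀ (show Function.Bijective T₀ from ⟨hinj, hsurj⟩), ?_, ?_⟩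
  · ext t
    simp only [Set.mem_image, Set.mem_setOf_eq]
    constructor
    · rintro ⟨v, hv, rfl⟩ k
      rw [LinearEquiv.ofBijective_apply, hT₀]
      exact Finset.sum_nonneg fun j _ => mul_nonneg (hν0 k j) (hφ v hv j)
    · intro ht
      obtain ⟨v, hφv, hv⟩ := hsurjaux t
      refine ⟨v, ?_, by rw [LinearEquiv.ofBijective_apply]; exact hv⟩
      apply hposchar
      intro i
      rw [hφv i]
      exact Finset.sum_nonneg fun k _ => mul_nonneg (ht k) (ha0 k i)
  · funext k
    rw [LinearEquiv.ofBijective_apply, hT₀]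
    simp only [hφu, mul_one]
    exact hν1 k

end Main
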